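/- Define ϕ(x) = Σ_{m=0}^∞ [ -exp(-πx(4m+1)²/4) + 2 exp(-πx(4m+2)²/4) - exp(-πx(4m+3)²/4) ]. Then ϕ(x) < 0 for all x > 0. -/
import Mathlib
set_option maxHeartbeats 1000000

open Real

lemma sumexp_nat {c : ℝ} (hc : 0 < c) : Summable fun n : ℕ => Real.exp (-c * (n : ℝ) ^ 2) := by
  have hg : Summable (fun n : ℕ => Real.exp (-c) ^ n) :=
    summable_geometric_of_lt_one (Real.exp_pos _).le
      (by rw [Real.exp_lt_one_iff]; linarith)
  refine Summable.of_nonneg_of_le (fun n => (Real.exp_pos _).le) (fun n => ?_) hg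
  rw [← Real.exp_nat_mul]
  apply Real.exp_le_exp.mpr
  have hn2 : (n:ℝ) ≤ (n:ℝ) ^ 2 := by
    rcases Nat.eq_zero_or_pos n with h | h
    · simp [h]
    · have : (1:ℝ) ≤ (n:ℝ) := by exact_mod_cast h
      nlinarith
  nlinarith [mul_le_mul_of_nonneg_left hn2 hc.le]

lemma sumexp_int {c : ℝ} (hc : 0 < c) : Summable fun n : ℤ => Real.exp (-c * (n : ℝ) ^ 2) := by
  apply Summable.of_nat_of_neg <;>
    · apply (sumexp_nat hc).congr
      intro n
      push_cast
      ring_nf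

noncomputable def thetaR (t : ℝ) : ℝ := ∑' n : ℤ, Real.exp (-π * t * (n : ℝ) ^ 2)

lemma thetaR_summable {t : ℝ} (ht : 0 < t) :
    Summable fun n : ℤ => Real.exp (-π * t * (n : ℝ) ^ 2) := by
  apply (sumexp_int (c := π * t) (by positivity)).congr
  intro n; ring_nf

noncomputable def phiB (x : ℝ) : ℝ :=
  ∑' m : ℕ,
    (-Real.exp (-Real.pi * x * (4 * (m : ℝ) + 1) ^ 2 / 4)
      + 2 * Real.exp (-Real.pi * x * (4 * (m : ℝ) + 2) ^ 2 / 4)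
      - Real.exp (-Real.pi * x * (4 * (m : ℝ) + 3) ^ 2 / 4))

lemma phiB_eq (x : ℝ) (hx : 0 < x) :
    phiB x = (3 * thetaR x - 2 * thetaR (4 * x) - thetaR (x / 4)) / 2 := by
  have hc : 0 < π * x / 4 := by positivity
  set F : ℤ → ℝ := fun n => Real.exp (-(π * x / 4) * (n : ℝ) ^ 2) with hFdef
  have hF : Summable F := sumexp_int hc
  have hFeven : ∀ n : ℤ, F (-n) = F n := by
    intro n; simp [hFdef]
  have hsub : ∀ k : ℤ, Summable fun n : ℤ => F (4 * n + k) := by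
    intro k
    exact hF.comp_injective (fun a b h => by omega)
  have hnat : ∀ k : ℤ, Summable fun m : ℕ => F (4 * (m : ℤ) + k) := by
    intro k
    exact (hsub k).comp_injective (fun a b h => by exact_mod_cast h)
  -- nat/neg splits
  have split : ∀ k k' : ℤ, (∀ m : ℕ, 4 * (-((m : ℤ) + 1)) + k = -(4 * (m : ℤ) + k')) →
      ∑' n : ℤ, F (4 * n + k)
        = (∑' m : ℕ, F (4 * (m : ℤ) + k)) + ∑' m : ℕ, F (4 * (m : ℤ) + k') := by
    intro k k' hkk'
    have h2 : Summable fun m : ℕ => F (4 * (-((m : ℤ) + 1)) + k) := by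
      apply (hnat k').congr
      intro m
      rw [hkk', hFeven]
    rw [tsum_of_nat_of_neg_add_one (f := fun n : ℤ => F (4 * n + k)) (hnat k) h2]
    congr 1
    exact tsum_congr fun m => by rw [hkk', hFeven]
  have h31 : ∀ m : ℕ, 4 * (-((m : ℤ) + 1)) + 3 = -(4 * (m : ℤ) + 1) := fun m => by ring
  have h13 : ∀ m : ℕ, 4 * (-((m : ℤ) + 1)) + 1 = -(4 * (m : ℤ) + 3) := fun m => by ring
  have h22 : ∀ m : ℕ, 4 * (-((m : ℤ) + 1)) + 2 = -(4 * (m : ℤ) + 2) := fun m => by ring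
  have hZ1 := split 1 3 h13
  have hZ2 := split 2 2 h22
  have hZ3 := split 3 1 h31
  -- phiB in terms of the one-sided sums
  have hphi : phiB x = -(∑' m : ℕ, F (4 * (m : ℤ) + 1)) + 2 * (∑' m : ℕ, F (4 * (m : ℤ) + 2))
      - ∑' m : ℕ, F (4 * (m : ℤ) + 3) := by
    have h1 : phiB x = ∑' m : ℕ,
        (-F (4 * (m : ℤ) + 1) + 2 * F (4 * (m : ℤ) + 2) - F (4 * (m : ℤ) + 3)) := by
      refine tsum_congr fun m => ?_
      have e1 : -Real.pi * x * (4 * (m : ℝ) + 1) ^ 2 / 4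
          = -(π * x / 4) * (((4 * (m : ℤ) + 1) : ℤ) : ℝ) ^ 2 := by push_cast; ring
      have e2 : -Real.pi * x * (4 * (m : ℝ) + 2) ^ 2 / 4
          = -(π * x / 4) * (((4 * (m : ℤ) + 2) : ℤ) : ℝ) ^ 2 := by push_cast; ring
      have e3 : -Real.pi * x * (4 * (m : ℝ) + 3) ^ 2 / 4
          = -(π * x / 4) * (((4 * (m : ℤ) + 3) : ℤ) : ℝ) ^ 2 := by push_cast; ring
      show -Real.exp _ + 2 * Real.exp _ - Real.exp _ = _
      rw [e1, e2, e3]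
    rw [h1, Summable.tsum_sub ((hnat 1).neg.add ((hnat 2).mul_left 2)) (hnat 3),
      Summable.tsum_add ((hnat 1).neg) ((hnat 2).mul_left 2), tsum_neg, tsum_mul_left]
  -- mod 2 split of thetaR x
  have hG : Summable (fun n : ℤ => Real.exp (-π * x * (n : ℝ) ^ 2)) := thetaR_summable hx
  have hGsub : ∀ k : ℤ, Summable fun q : ℤ => Real.exp (-π * x * (((q * 2 + k) : ℤ) : ℝ) ^ 2) :=
    fun k => hG.comp_injective (fun a b h => by omega)
  have h2s : Summable (fun p : ℤ × Fin 2 =>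
      Real.exp (-π * x * (((p.1 * 2 + ((p.2 : ℕ) : ℤ)) : ℤ) : ℝ) ^ 2)) := by
    apply ((Int.divModEquiv 2).symm.summable_iff.mpr hG).congr
    intro p
    simp [Int.divModEquiv]
  have hthx : thetaR x = thetaR (4 * x) + ∑' n : ℤ, F (4 * n + 2) := by
    calc thetaR x
        = ∑' p : ℤ × Fin 2, Real.exp (-π * x * (((p.1 * 2 + ((p.2 : ℕ) : ℤ)) : ℤ) : ℝ) ^ 2) := by
          rw [thetaR, ← (Int.divModEquiv 2).symm.tsum_eq
            (fun n : ℤ => Real.exp (-π * x * (n : ℝ) ^ 2))]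
          refine tsum_congr fun p => ?_
          simp [Int.divModEquiv]
      _ = ∑' q : ℤ, ∑' r : Fin 2, Real.exp (-π * x * (((q * 2 + ((r : ℕ) : ℤ)) : ℤ) : ℝ) ^ 2) :=
          Summable.tsum_prod h2s
      _ = ∑' q : ℤ, (Real.exp (-π * x * (((q * 2) : ℤ) : ℝ) ^ 2)
            + Real.exp (-π * x * (((q * 2 + 1) : ℤ) : ℝ) ^ 2)) := by
          refine tsum_congr fun q => ?_
          rw [tsum_fintype, Fin.sum_univ_two]
          norm_num
      _ = (∑' q : ℤ, Real.exp (-π * x * (((q * 2) : ℤ) : ℝ) ^ 2))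
            + ∑' q : ℤ, Real.exp (-π * x * (((q * 2 + 1) : ℤ) : ℝ) ^ 2) := by
          apply Summable.tsum_add
          · exact hG.comp_injective (fun a b h => by omega)
          · exact hGsub 1
      _ = thetaR (4 * x) + ∑' n : ℤ, F (4 * n + 2) := by
          congr 1
          · rw [thetaR]
            refine tsum_congr fun q => ?_
            congr 1
            push_cast
            ring
          · refine tsum_congr fun q => ?_
            rw [hFdef]
            congr 1
            push_cast
            ring
  -- mod 4 split of thetaR (x/4)
  have h4s : Summable (fun p : ℤ × Fin 4 => F (p.1 * 4 + ((p.2 : ℕ) : ℤ))) := by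
    apply ((Int.divModEquiv 4).symm.summable_iff.mpr hF).congr
    intro p
    simp [Int.divModEquiv]
  have hsub' : ∀ k : ℤ, Summable fun q : ℤ => F (q * 4 + k) := by
    intro k
    exact hF.comp_injective (fun a b h => by omega)
  have hmul : ∀ k : ℤ, (∑' q : ℤ, F (q * 4 + k)) = ∑' q : ℤ, F (4 * q + k) :=
    fun k => tsum_congr fun q => by rw [mul_comm]
  have hthq : thetaR (x / 4) = thetaR (4 * x) + ((∑' n : ℤ, F (4 * n + 1))
      + (∑' n : ℤ, F (4 * n + 2)) + ∑' n : ℤ, F (4 * n + 3)) := by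
    calc thetaR (x / 4)
        = ∑' n : ℤ, F n := by
          rw [thetaR]
          refine tsum_congr fun n => ?_
          rw [hFdef]
          congr 1
          ring
      _ = ∑' p : ℤ × Fin 4, F (p.1 * 4 + ((p.2 : ℕ) : ℤ)) := by
          rw [← (Int.divModEquiv 4).symm.tsum_eq F]
          refine tsum_congr fun p => ?_
          simp [Int.divModEquiv]
      _ = ∑' q : ℤ, ∑' r : Fin 4, F (q * 4 + ((r : ℕ) : ℤ)) := Summable.tsum_prod h4s
      _ = ∑' q : ℤ, (F (q * 4) + (F (q * 4 + 1) + F (q * 4 + 2) + F (q * 4 + 3))) := by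
          refine tsum_congr fun q => ?_
          rw [tsum_fintype, Fin.sum_univ_four]
          simp only [show ((0 : Fin 4) : ℕ) = 0 from rfl, show ((1 : Fin 4) : ℕ) = 1 from rfl,
            show ((2 : Fin 4) : ℕ) = 2 from rfl, show ((3 : Fin 4) : ℕ) = 3 from rfl]
          push_cast
          ring_nf
      _ = (∑' q : ℤ, F (q * 4)) + ((∑' q : ℤ, F (q * 4 + 1)) + (∑' q : ℤ, F (q * 4 + 2))
            + ∑' q : ℤ, F (q * 4 + 3)) := by
          rw [Summable.tsum_add, Summable.tsum_add, Summable.tsum_add]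
          · exact hsub' 1
          · exact hsub' 2
          · exact (hsub' 1).add (hsub' 2)
          · exact hsub' 3
          · exact hF.comp_injective (fun a b h => by omega)
          · exact ((hsub' 1).add (hsub' 2)).add (hsub' 3)
      _ = thetaR (4 * x) + ((∑' n : ℤ, F (4 * n + 1)) + (∑' n : ℤ, F (4 * n + 2))
            + ∑' n : ℤ, F (4 * n + 3)) := by
          have theta4 : thetaR (4 * x) = ∑' q : ℤ, F (q * 4) := by
            rw [thetaR]
            refine tsum_congr fun q => ?_
            rw [hFdef]
            congr 1
            push_cast
            ring
          rw [hmul 1, hmul 2, hmul 3, ← theta4]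
  rw [hphi]
  linarith [hZ1, hZ2, hZ3, hthx, hthq]

lemma thetaR_inv {a : ℝ} (ha : 0 < a) : thetaR a = Real.sqrt a⁻¹ * thetaR a⁻¹ := by
  rw [thetaR, Real.tsum_exp_neg_mul_int_sq ha, thetaR]
  have h1 : (1 : ℝ) / a ^ ((1:ℝ)/2) = Real.sqrt a⁻¹ := by
    rw [Real.sqrt_eq_rpow, Real.inv_rpow ha.le, one_div]
  rw [h1]
  congr 1

lemma summable_term {x : ℝ} (hx : 0 < x) (k : ℕ) :
    Summable fun m : ℕ => Real.exp (-Real.pi * x * (4 * (m : ℝ) + k) ^ 2 / 4) := by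
  refine Summable.of_nonneg_of_le (fun m => (Real.exp_pos _).le) (fun m => ?_)
    (sumexp_nat (c := π * x / 4) (by positivity))
  apply Real.exp_le_exp.mpr
  have hm : (0:ℝ) ≤ (m:ℝ) := by positivity
  have hk : (0:ℝ) ≤ (k:ℝ) := by positivity
  have hsq : (m:ℝ) ^ 2 ≤ (4 * (m:ℝ) + k) ^ 2 := by nlinarith
  have hc : (0:ℝ) ≤ π * x / 4 := by positivity
  nlinarith [mul_le_mul_of_nonneg_left hsq hc]

lemma phiB_neg_of_one_le {x : ℝ} (hx : 1 ≤ x) : phiB x < 0 := by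
  have hx0 : (0:ℝ) < x := lt_of_lt_of_le one_pos hx
  have hterm : ∀ m : ℕ,
      (-Real.exp (-Real.pi * x * (4 * (m : ℝ) + 1) ^ 2 / 4)
        + 2 * Real.exp (-Real.pi * x * (4 * (m : ℝ) + 2) ^ 2 / 4)
        - Real.exp (-Real.pi * x * (4 * (m : ℝ) + 3) ^ 2 / 4)) < 0 := by
    intro m
    have h2 : 2 * Real.exp (-Real.pi * x * (4 * (m : ℝ) + 2) ^ 2 / 4)
        < Real.exp (-Real.pi * x * (4 * (m : ℝ) + 1) ^ 2 / 4) := by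
      have hl : Real.log 2 < 0.6931471808 := Real.log_two_lt_d9
      have hpi : (3:ℝ) < π := Real.pi_gt_three
      have hm : (0:ℝ) ≤ (m:ℝ) := by positivity
      have hpix : (3:ℝ) ≤ π * x := by nlinarith
      have key : Real.log 2 + (-Real.pi * x * (4 * (m : ℝ) + 2) ^ 2 / 4)
          < -Real.pi * x * (4 * (m : ℝ) + 1) ^ 2 / 4 := by
        nlinarith [mul_le_mul_of_nonneg_right hpix (by positivity : (0:ℝ) ≤ 8 * (m:ℝ) + 3)]
      calc 2 * Real.exp (-Real.pi * x * (4 * (m : ℝ) + 2) ^ 2 / 4)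
          = Real.exp (Real.log 2 + (-Real.pi * x * (4 * (m : ℝ) + 2) ^ 2 / 4)) := by
            rw [Real.exp_add, Real.exp_log (by norm_num : (0:ℝ) < 2)]
        _ < _ := Real.exp_lt_exp.mpr key
    have h3 := Real.exp_pos (-Real.pi * x * (4 * (m : ℝ) + 3) ^ 2 / 4)
    linarith
  have hs : Summable fun m : ℕ =>
      (-Real.exp (-Real.pi * x * (4 * (m : ℝ) + 1) ^ 2 / 4)
        + 2 * Real.exp (-Real.pi * x * (4 * (m : ℝ) + 2) ^ 2 / 4)
        - Real.exp (-Real.pi * x * (4 * (m : ℝ) + 3) ^ 2 / 4)) := by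
    have h1 := summable_term hx0 1
    have h2 := summable_term hx0 2
    have h3 := summable_term hx0 3
    push_cast at h1 h2 h3
    exact (h1.neg.add (h2.mul_left 2)).sub h3
  have : phiB x < ∑' _ : ℕ, (0:ℝ) :=
    Summable.tsum_lt_tsum (fun m => (hterm m).le) (hterm 0) hs summable_zero
  simpa using this

/-- `ϕ(x) < 0` for all `x > 0`. -/
theorem phiB_neg (x : ℝ) (hx : 0 < x) : phiB x < 0 := by
  rcases le_or_gt 1 x with h | h
  · exact phiB_neg_of_one_le h
  · have hx4 : (0:ℝ) < 4 * x := by linarith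
    have hxq : (0:ℝ) < x / 4 := by linarith
    have hy : (1:ℝ) ≤ x⁻¹ := (one_le_inv₀ hx).mpr h.le
    have hs4 : Real.sqrt 4 = 2 := by
      rw [show (4:ℝ) = 2 ^ 2 by norm_num, Real.sqrt_sq (by norm_num : (0:ℝ) ≤ 2)]
    have t1 : thetaR x = Real.sqrt x⁻¹ * thetaR x⁻¹ := thetaR_inv hx
    have t2 : thetaR (4 * x) = Real.sqrt x⁻¹ / 2 * thetaR (x⁻¹ / 4) := by
      rw [thetaR_inv hx4, show (4 * x)⁻¹ = x⁻¹ / 4 by rw [mul_inv]; ring]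
      congr 1
      rw [Real.sqrt_div (by positivity : (0:ℝ) ≤ x⁻¹), hs4]
    have t3 : thetaR (x / 4) = 2 * Real.sqrt x⁻¹ * thetaR (4 * x⁻¹) := by
      rw [thetaR_inv hxq, show (x / 4)⁻¹ = 4 * x⁻¹ by rw [inv_div]; ring]
      congr 1
      rw [Real.sqrt_mul (by norm_num : (0:ℝ) ≤ 4), hs4]
    have key : phiB x = Real.sqrt x⁻¹ * phiB x⁻¹ := by
      rw [phiB_eq x hx, phiB_eq x⁻¹ (by positivity), t1, t2, t3]
      ring
    rw [key]
    exact mul_neg_of_pos_of_neg (Real.sqrt_pos.mpr (by positivity)) (phiB_neg_of_one_le hy)
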